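/- arXiv:1302.0513 — 4 statements merged into one kernel-verified Lean document; each statement's English description precedes it below -/
import Mathlib

section
/- Let m ≤ n and s ≥ 0 be a real number. Define the sequence Λ_s of m+n real numbers: Λ_s(i) = (s−(m−1))/2 + (i−1) for 1 ≤ i ≤ m, and Λ_s(m+j) = (−s−(n−1))/2 + (j−1) for 1 ≤ j ≤ n. If a permutation w of {1,...,m+n} satisfies w(1) < ... < w(m), w(m+1) < ... < w(m+n), and Λ_s(w⁻¹(i)) = Λ_s(i) for all i, then either w is the identity, or s = 0 and m = n (in which case there are exactly two such w). -/
/-- The nontrivial shuffle swapping the two blocks of size `m`. -/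
def stmt1Sigma (m : ℕ) : ℕ → ℕ := fun i =>
  if 1 ≤ i ∧ i ≤ m then i + m else if m + 1 ≤ i ∧ i ≤ m + m then i - m else i

/-- If `w` moves some point, then `s = 0` and `m = n`. -/
lemma stmt1_lemA (m n : ℕ) (hm : 1 ≤ m) (hmn : m ≤ n) (s : ℝ) (hs : 0 ≤ s)
    (Λ : ℕ → ℝ)
    (hΛ1 : ∀ i, 1 ≤ i → i ≤ m → Λ i = (s - ((m : ℝ) - 1)) / 2 + ((i : ℝ) - 1))
    (hΛ2 : ∀ j, 1 ≤ j → j ≤ n → Λ (m + j) = (-s - ((n : ℝ) - 1)) / 2 + ((j : ℝ) - 1))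
    (w : ℕ → ℕ)
    (hbij : Set.BijOn w (Set.Icc 1 (m + n)) (Set.Icc 1 (m + n)))
    (hsh2 : ∀ i j, m + 1 ≤ i → i < j → j ≤ m + n → w i < w j)
    (hfix : ∀ i ∈ Set.Icc 1 (m + n), Λ (w i) = Λ i)
    (k : ℕ) (hk : k ∈ Set.Icc 1 (m + n)) (hkm : w k ≠ k) :
    s = 0 ∧ m = n := by
  have hinj1 : ∀ i i', 1 ≤ i → i ≤ m → 1 ≤ i' → i' ≤ m → Λ i = Λ i' → i = i' := by
    intro i i' h1 h2 h3 h4 h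
    rw [hΛ1 i h1 h2, hΛ1 i' h3 h4] at h
    have : (i : ℝ) = i' := by linarith
    exact_mod_cast this
  have hcross : ∀ i j, 1 ≤ i → i ≤ m → 1 ≤ j → j ≤ n → Λ i = Λ (m + j) →
      (j : ℝ) = (i : ℝ) + s + ((n : ℝ) - m) / 2 := by
    intro i j h1 h2 h3 h4 h
    rw [hΛ1 i h1 h2, hΛ2 j h3 h4] at h
    linarith
  -- dichotomy for block 1
  have hd1 : ∀ i, 1 ≤ i → i ≤ m → w i = i ∨ (m + 1 ≤ w i ∧ w i ≤ m + n) := by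
    intro i h1 h2
    have hmem : i ∈ Set.Icc 1 (m + n) := Set.mem_Icc.mpr ⟨h1, by omega⟩
    have hw := hbij.mapsTo hmem
    rw [Set.mem_Icc] at hw
    by_cases h : w i ≤ m
    · exact Or.inl (hinj1 (w i) i hw.1 h h1 h2 (hfix i hmem))
    · exact Or.inr ⟨by omega, hw.2⟩
  -- dichotomy for block 2
  have hd2 : ∀ j, 1 ≤ j → j ≤ n → w (m + j) = m + j ∨ (1 ≤ w (m + j) ∧ w (m + j) ≤ m) := by
    intro j h1 h2
    have hmem : m + j ∈ Set.Icc 1 (m + n) := Set.mem_Icc.mpr ⟨by omega, by omega⟩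
    have hw := hbij.mapsTo hmem
    rw [Set.mem_Icc] at hw
    by_cases h : w (m + j) ≤ m
    · exact Or.inr ⟨hw.1, h⟩
    · left
      have hj2 : j ≤ n := h2
      obtain ⟨j', hj'⟩ : ∃ j', w (m + j) = m + j' := ⟨w (m + j) - m, by omega⟩
      have h1' : 1 ≤ j' := by omega
      have h2' : j' ≤ n := by omega
      have hL : Λ (m + j') = Λ (m + j) := by rw [← hj']; exact hfix (m + j) hmem
      rw [hΛ2 j' h1' h2', hΛ2 j h1 h2] at hL
      have : (j' : ℝ) = j := by linarith
      have : j' = j := by exact_mod_cast this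
      omega
  rw [Set.mem_Icc] at hk
  -- find a moved point in block 1
  have hstep1 : ∃ i, 1 ≤ i ∧ i ≤ m ∧ w i ≠ i := by
    by_cases hkb : k ≤ m
    · exact ⟨k, hk.1, hkb, hkm⟩
    · obtain ⟨j, rfl⟩ : ∃ j, k = m + j := ⟨k - m, by omega⟩
      have h1 : 1 ≤ j := by omega
      have h2 : j ≤ n := by omega
      rcases hd2 j h1 h2 with h | h
      · exact absurd h hkm
      · refine ⟨w (m + j), h.1, h.2, fun hcon => ?_⟩
        have hmem1 : m + j ∈ Set.Icc 1 (m + n) := Set.mem_Icc.mpr ⟨by omega, by omega⟩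
        have hmem2 : w (m + j) ∈ Set.Icc 1 (m + n) := Set.mem_Icc.mpr ⟨h.1, by omega⟩
        have := hbij.injOn hmem1 hmem2 hcon.symm
        omega
  obtain ⟨i0, hi01, hi0m, hi0mv⟩ := hstep1
  have hi0mem : i0 ∈ Set.Icc 1 (m + n) := Set.mem_Icc.mpr ⟨hi01, by omega⟩
  rcases hd1 i0 hi01 hi0m with h | h
  · exact absurd h hi0mv
  obtain ⟨j0, hj0⟩ : ∃ j0, w i0 = m + j0 := ⟨w i0 - m, by omega⟩
  have hj01 : 1 ≤ j0 := by omega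
  have hj0n : j0 ≤ n := by omega
  have hΛi0 : Λ (m + j0) = Λ i0 := by rw [← hj0]; exact hfix i0 hi0mem
  have hmj0mem : m + j0 ∈ Set.Icc 1 (m + n) := Set.mem_Icc.mpr ⟨by omega, by omega⟩
  -- w (m + j0) = i0
  have hwback : w (m + j0) = i0 := by
    have hne : w (m + j0) ≠ m + j0 := by
      intro hcon
      have : w (m + j0) = w i0 := by rw [hcon, hj0]
      have := hbij.injOn hmj0mem hi0mem this
      omega
    rcases hd2 j0 hj01 hj0n with h' | h'
    · exact absurd h' hne
    · exact hinj1 _ _ h'.1 h'.2 hi01 hi0m (by rw [hfix (m + j0) hmj0mem, hΛi0])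
  -- find i1 in block 1 with Λ i1 = Λ (m + 1)
  have hstep4 : ∃ i1, 1 ≤ i1 ∧ i1 ≤ m ∧ Λ i1 = Λ (m + 1) := by
    by_cases hj0' : j0 = 1
    · exact ⟨i0, hi01, hi0m, by rw [← hj0', hΛi0]⟩
    · have hlt : w (m + 1) < w (m + j0) := hsh2 (m + 1) (m + j0) le_rfl (by omega) (by omega)
      rw [hwback] at hlt
      have hmem1 : m + 1 ∈ Set.Icc 1 (m + n) := Set.mem_Icc.mpr ⟨by omega, by omega⟩
      have hw := hbij.mapsTo hmem1
      rw [Set.mem_Icc] at hw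
      exact ⟨w (m + 1), hw.1, by omega, hfix (m + 1) hmem1⟩
  obtain ⟨i1, hi11, hi1m, hi1eq⟩ := hstep4
  have hkey := hcross i1 1 hi11 hi1m le_rfl (by omega) hi1eq
  have h1le : (1 : ℝ) ≤ (i1 : ℝ) := by exact_mod_cast hi11
  have hnm : (m : ℝ) ≤ (n : ℝ) := by exact_mod_cast hmn
  push_cast at hkey
  constructor
  · linarith
  · have : (m : ℝ) = n := by linarith
    exact_mod_cast this

/-- In the `s = 0`, `m = n` case, a moved point forces `w = stmt1Sigma m`. -/
lemma stmt1_lemB (m : ℕ) (hm : 1 ≤ m) (Λ : ℕ → ℝ)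
    (hinj1 : ∀ i i', 1 ≤ i → i ≤ m → 1 ≤ i' → i' ≤ m → Λ i = Λ i' → i = i')
    (hinj2 : ∀ j j', 1 ≤ j → j ≤ m → 1 ≤ j' → j' ≤ m → Λ (m + j) = Λ (m + j') → j = j')
    (hpair : ∀ j, 1 ≤ j → j ≤ m → Λ (m + j) = Λ j)
    (w : ℕ → ℕ)
    (hbij : Set.BijOn w (Set.Icc 1 (m + m)) (Set.Icc 1 (m + m)))
    (hid : ∀ i ∉ Set.Icc 1 (m + m), w i = i)
    (hsh1 : ∀ i j, 1 ≤ i → i < j → j ≤ m → w i < w j)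
    (hsh2 : ∀ i j, m + 1 ≤ i → i < j → j ≤ m + m → w i < w j)
    (hfix : ∀ i ∈ Set.Icc 1 (m + m), Λ (w i) = Λ i)
    (k : ℕ) (hk : k ∈ Set.Icc 1 (m + m)) (hkm : w k ≠ k) :
    ∀ i, w i = stmt1Sigma m i := by
  have hd1 : ∀ i, 1 ≤ i → i ≤ m → w i = i ∨ w i = m + i := by
    intro i h1 h2
    have hmem : i ∈ Set.Icc 1 (m + m) := Set.mem_Icc.mpr ⟨h1, by omega⟩
    have hw := hbij.mapsTo hmem
    rw [Set.mem_Icc] at hw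
    by_cases h : w i ≤ m
    · exact Or.inl (hinj1 (w i) i hw.1 h h1 h2 (hfix i hmem))
    · right
      obtain ⟨j, hj⟩ : ∃ j, w i = m + j := ⟨w i - m, by omega⟩
      have hL : Λ (m + j) = Λ (m + i) := by
        rw [← hj, hfix i hmem]; exact (hpair i h1 h2).symm
      have := hinj2 j i (by omega) (by omega) h1 h2 hL
      omega
  have hd2 : ∀ j, 1 ≤ j → j ≤ m → w (m + j) = m + j ∨ w (m + j) = j := by
    intro j h1 h2
    have hmem : m + j ∈ Set.Icc 1 (m + m) := Set.mem_Icc.mpr ⟨by omega, by omega⟩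
    have hw := hbij.mapsTo hmem
    rw [Set.mem_Icc] at hw
    by_cases h : w (m + j) ≤ m
    · right
      refine hinj1 _ _ hw.1 h h1 h2 ?_
      rw [hfix (m + j) hmem, hpair j h1 h2]
    · left
      obtain ⟨j', hj'⟩ : ∃ j', w (m + j) = m + j' := ⟨w (m + j) - m, by omega⟩
      have hL : Λ (m + j') = Λ (m + j) := by rw [← hj']; exact hfix (m + j) hmem
      have := hinj2 j' j (by omega) (by omega) h1 h2 hL
      omega
  rw [Set.mem_Icc] at hk
  -- find a moved point in block 1
  have hstep1 : ∃ i, 1 ≤ i ∧ i ≤ m ∧ w i ≠ i := by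
    by_cases hkb : k ≤ m
    · exact ⟨k, hk.1, hkb, hkm⟩
    · obtain ⟨j, rfl⟩ : ∃ j, k = m + j := ⟨k - m, by omega⟩
      have h1 : 1 ≤ j := by omega
      have h2 : j ≤ m := by omega
      rcases hd2 j h1 h2 with h | h
      · exact absurd h hkm
      · refine ⟨j, h1, h2, fun hcon => ?_⟩
        have hmem1 : m + j ∈ Set.Icc 1 (m + m) := Set.mem_Icc.mpr ⟨by omega, by omega⟩
        have hmem2 : j ∈ Set.Icc 1 (m + m) := Set.mem_Icc.mpr ⟨h1, by omega⟩
        have : w (m + j) = w j := by rw [h, hcon]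
        have := hbij.injOn hmem1 hmem2 this
        omega
  obtain ⟨i0, hi01, hi0m, hi0mv⟩ := hstep1
  have hi0mem : i0 ∈ Set.Icc 1 (m + m) := Set.mem_Icc.mpr ⟨hi01, by omega⟩
  have hwi0 : w i0 = m + i0 := (hd1 i0 hi01 hi0m).resolve_left hi0mv
  have hmi0mem : m + i0 ∈ Set.Icc 1 (m + m) := Set.mem_Icc.mpr ⟨by omega, by omega⟩
  have hwback : w (m + i0) = i0 := by
    rcases hd2 i0 hi01 hi0m with h | h
    · exfalso
      have : w (m + i0) = w i0 := by rw [h, hwi0]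
      have := hbij.injOn hmi0mem hi0mem this
      omega
    · exact h
  have hall1 : ∀ i, 1 ≤ i → i ≤ m → w i = m + i := by
    intro i h1 h2
    rcases lt_trichotomy i i0 with hlt | heq | hgt
    · have hlt2 : w (m + i) < w (m + i0) := hsh2 (m + i) (m + i0) (by omega) (by omega) (by omega)
      rw [hwback] at hlt2
      have hw2 : w (m + i) = i := by
        rcases hd2 i h1 h2 with h | h
        · omega
        · exact h
      refine (hd1 i h1 h2).resolve_left fun hcon => ?_
      have hmem1 : m + i ∈ Set.Icc 1 (m + m) := Set.mem_Icc.mpr ⟨by omega, by omega⟩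
      have hmem2 : i ∈ Set.Icc 1 (m + m) := Set.mem_Icc.mpr ⟨h1, by omega⟩
      have : w (m + i) = w i := by rw [hw2, hcon]
      have := hbij.injOn hmem1 hmem2 this
      omega
    · rw [heq]; exact hwi0
    · have := hsh1 i0 i hi01 hgt h2
      rw [hwi0] at this
      rcases hd1 i h1 h2 with h | h
      · omega
      · exact h
  have hall2 : ∀ j, 1 ≤ j → j ≤ m → w (m + j) = j := by
    intro j h1 h2
    rcases hd2 j h1 h2 with h | h
    · exfalso
      have : w (m + j) = w j := by rw [h, hall1 j h1 h2]
      have hmem1 : m + j ∈ Set.Icc 1 (m + m) := Set.mem_Icc.mpr ⟨by omega, by omega⟩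
      have hmem2 : j ∈ Set.Icc 1 (m + m) := Set.mem_Icc.mpr ⟨h1, by omega⟩
      have := hbij.injOn hmem1 hmem2 this
      omega
    · exact h
  intro i
  unfold stmt1Sigma
  split_ifs with h1 h2
  · rw [hall1 i h1.1 h1.2, Nat.add_comm]
  · obtain ⟨j, rfl⟩ : ∃ j, i = m + j := ⟨i - m, by omega⟩
    rw [hall2 j (by omega) (by omega)]
    omega
  · exact hid i (by rw [Set.mem_Icc]; omega)

/-- For `m ≤ n`, `s ≥ 0`, and the exponent sequence `Λ_s` of the
degenerate principal series, any shuffle permutation `w` (increasing on each of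
the blocks `{1,...,m}` and `{m+1,...,m+n}`) fixing `Λ_s` (i.e. `Λ_s ∘ w⁻¹ = Λ_s`,
equivalently `Λ_s ∘ w = Λ_s`) is the identity, unless `s = 0` and `m = n`, in
which case there are exactly two such `w`. -/
theorem stmt1 (m n : ℕ) (hm : 1 ≤ m) (hmn : m ≤ n) (s : ℝ) (hs : 0 ≤ s)
    (Λ : ℕ → ℝ)
    (hΛ1 : ∀ i, 1 ≤ i → i ≤ m → Λ i = (s - ((m : ℝ) - 1)) / 2 + ((i : ℝ) - 1))
    (hΛ2 : ∀ j, 1 ≤ j → j ≤ n → Λ (m + j) = (-s - ((n : ℝ) - 1)) / 2 + ((j : ℝ) - 1))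
    (w : ℕ → ℕ)
    (hbij : Set.BijOn w (Set.Icc 1 (m + n)) (Set.Icc 1 (m + n)))
    (hid : ∀ i ∉ Set.Icc 1 (m + n), w i = i)
    (hsh1 : ∀ i j, 1 ≤ i → i < j → j ≤ m → w i < w j)
    (hsh2 : ∀ i j, m + 1 ≤ i → i < j → j ≤ m + n → w i < w j)
    (hfix : ∀ i ∈ Set.Icc 1 (m + n), Λ (w i) = Λ i) :
    (∀ i, w i = i) ∨
      (s = 0 ∧ m = n ∧
        {w' : ℕ → ℕ |
            Set.BijOn w' (Set.Icc 1 (m + n)) (Set.Icc 1 (m + n)) ∧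
            (∀ i ∉ Set.Icc 1 (m + n), w' i = i) ∧
            (∀ i j, 1 ≤ i → i < j → j ≤ m → w' i < w' j) ∧
            (∀ i j, m + 1 ≤ i → i < j → j ≤ m + n → w' i < w' j) ∧
            (∀ i ∈ Set.Icc 1 (m + n), Λ (w' i) = Λ i)}.ncard = 2) := by
  by_cases hall : ∀ i ∈ Set.Icc 1 (m + n), w i = i
  · left
    intro i
    by_cases h : i ∈ Set.Icc 1 (m + n)
    · exact hall i h
    · exact hid i h
  · right
    push_neg at hall
    obtain ⟨k, hk, hkw⟩ := hall
    obtain ⟨hs0, hmn'⟩ := stmt1_lemA m n hm hmn s hs Λ hΛ1 hΛ2 w hbij hsh2 hfix k hk hkw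
    subst hs0
    subst hmn'
    refine ⟨rfl, rfl, ?_⟩
    have hinj1 : ∀ i i', 1 ≤ i → i ≤ m → 1 ≤ i' → i' ≤ m → Λ i = Λ i' → i = i' := by
      intro i i' h1 h2 h3 h4 h
      rw [hΛ1 i h1 h2, hΛ1 i' h3 h4] at h
      have : (i : ℝ) = i' := by linarith
      exact_mod_cast this
    have hinj2 : ∀ j j', 1 ≤ j → j ≤ m → 1 ≤ j' → j' ≤ m → Λ (m + j) = Λ (m + j') → j = j' := by
      intro j j' h1 h2 h3 h4 h
      rw [hΛ2 j h1 h2, hΛ2 j' h3 h4] at h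
      have : (j : ℝ) = j' := by linarith
      exact_mod_cast this
    have hpair : ∀ j, 1 ≤ j → j ≤ m → Λ (m + j) = Λ j := by
      intro j h1 h2
      rw [hΛ2 j h1 h2, hΛ1 j h1 h2]
      norm_num
    have hset : {w' : ℕ → ℕ |
            Set.BijOn w' (Set.Icc 1 (m + m)) (Set.Icc 1 (m + m)) ∧
            (∀ i ∉ Set.Icc 1 (m + m), w' i = i) ∧
            (∀ i j, 1 ≤ i → i < j → j ≤ m → w' i < w' j) ∧
            (∀ i j, m + 1 ≤ i → i < j → j ≤ m + m → w' i < w' j) ∧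
            (∀ i ∈ Set.Icc 1 (m + m), Λ (w' i) = Λ i)} =
        {(fun i => i : ℕ → ℕ), stmt1Sigma m} := by
      ext w'
      simp only [Set.mem_setOf_eq, Set.mem_insert_iff, Set.mem_singleton_iff]
      constructor
      · rintro ⟨hb, hi, h1, h2, hf⟩
        by_cases hW : ∀ i ∈ Set.Icc 1 (m + m), w' i = i
        · left
          funext i
          by_cases h : i ∈ Set.Icc 1 (m + m)
          · exact hW i h
          · exact hi i h
        · right
          push_neg at hW
          obtain ⟨k', hk', hkw'⟩ := hW
          funext i
          exact stmt1_lemB m hm Λ hinj1 hinj2 hpair w' hb hi h1 h2 hf k' hk' hkw' i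
      · rintro (rfl | rfl)
        · exact ⟨⟨fun x hx => hx, fun x _ y _ h => h, fun x hx => ⟨x, hx, rfl⟩⟩,
            fun i _ => rfl, fun i j _ hij _ => hij, fun i j _ hij _ => hij, fun i _ => rfl⟩
        · refine ⟨⟨?_, ?_, ?_⟩, ?_, ?_, ?_, ?_⟩
          · intro x hx
            rw [Set.mem_Icc] at hx ⊢
            unfold stmt1Sigma
            split_ifs <;> omega
          · intro x hx y hy h
            rw [Set.mem_Icc] at hx hy
            unfold stmt1Sigma at h
            split_ifs at h <;> omega
          · intro y hy
            rw [Set.mem_Icc] at hy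
            by_cases h : y ≤ m
            · refine ⟨m + y, Set.mem_Icc.mpr ⟨by omega, by omega⟩, ?_⟩
              unfold stmt1Sigma
              split_ifs <;> omega
            · refine ⟨y - m, Set.mem_Icc.mpr ⟨by omega, by omega⟩, ?_⟩
              unfold stmt1Sigma
              split_ifs <;> omega
          · intro i hi
            rw [Set.mem_Icc] at hi
            unfold stmt1Sigma
            split_ifs <;> omega
          · intro i j h1 h2 h3
            unfold stmt1Sigma
            split_ifs <;> omega
          · intro i j h1 h2 h3
            unfold stmt1Sigma
            split_ifs <;> omega
          · intro i hi
            rw [Set.mem_Icc] at hi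
            by_cases h : i ≤ m
            · have hσ : stmt1Sigma m i = i + m := by
                unfold stmt1Sigma; split_ifs <;> omega
              rw [hσ, Nat.add_comm]
              exact hpair i hi.1 h
            · obtain ⟨j, rfl⟩ : ∃ j, i = m + j := ⟨i - m, by omega⟩
              have hσ : stmt1Sigma m (m + j) = j := by
                unfold stmt1Sigma; split_ifs <;> omega
              rw [hσ]
              exact (hpair j (by omega) (by omega)).symm
    rw [hset]
    refine Set.ncard_pair ?_
    intro h
    have := congrFun h 1
    unfold stmt1Sigma at this
    split_ifs at this <;> omega
end

section
/- Let m ≤ n, s ∈ ℝ, and define Λ_s as the sequence of exponents: Λ_s(i) = (s−(m−1))/2 + (i−1) for 1 ≤ i ≤ m and Λ_s(m+j) = (−s−(n−1))/2 + (j−1) for 1 ≤ j ≤ n. Suppose w₁ ≠ w₂ are shuffle permutations (increasing on {1,...,m} and on {m+1,...,m+n}) with w₁∘Λ_s = w₂∘Λ_s (i.e. Λ_s∘w₁⁻¹w₂ = Λ_s as sequences). Then there is a nonempty finite set I ⊆ {1,...,m} such that s + (m+n)/2 + i ∈ {m+1,...,m+n} for all i ∈ I, w₂(i) = w₁(s+(m+n)/2+i)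 and w₂(s+(m+n)/2+i) = w₁(i) for i ∈ I, and w₂ = w₁ on the complement of {i, s+(m+n)/2+i : i ∈ I}. -/
/-- If two distinct shuffle permutations `w₁ ≠ w₂` satisfy
`w₁(Λ_s) = w₂(Λ_s)` (i.e. `Λ_s ∘ w₁⁻¹ ∘ w₂ = Λ_s`, encoded here as:
`w₂ i = w₁ j → Λ j = Λ i`), then there is a nonempty set `I ⊆ {1,...,m}` such
that for each `i ∈ I` the index `j = s + (m+n)/2 + i` lies in `{m+1,...,m+n}`,
the values of `w₁` and `w₂` are swapped at `i` and `j`, and `w₁ = w₂` away from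
these indices. -/
theorem stmt2 (m n : ℕ) (hm : 1 ≤ m) (hmn : m ≤ n) (s : ℝ)
    (Λ : ℕ → ℝ)
    (hΛ1 : ∀ i, 1 ≤ i → i ≤ m → Λ i = (s - ((m : ℝ) - 1)) / 2 + ((i : ℝ) - 1))
    (hΛ2 : ∀ j, 1 ≤ j → j ≤ n → Λ (m + j) = (-s - ((n : ℝ) - 1)) / 2 + ((j : ℝ) - 1))
    (w₁ w₂ : ℕ → ℕ)
    (hbij₁ : Set.BijOn w₁ (Set.Icc 1 (m + n)) (Set.Icc 1 (m + n)))
    (hid₁ : ∀ i ∉ Set.Icc 1 (m + n), w₁ i = i)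
    (hsh₁a : ∀ i j, 1 ≤ i → i < j → j ≤ m → w₁ i < w₁ j)
    (hsh₁b : ∀ i j, m + 1 ≤ i → i < j → j ≤ m + n → w₁ i < w₁ j)
    (hbij₂ : Set.BijOn w₂ (Set.Icc 1 (m + n)) (Set.Icc 1 (m + n)))
    (hid₂ : ∀ i ∉ Set.Icc 1 (m + n), w₂ i = i)
    (hsh₂a : ∀ i j, 1 ≤ i → i < j → j ≤ m → w₂ i < w₂ j)
    (hsh₂b : ∀ i j, m + 1 ≤ i → i < j → j ≤ m + n → w₂ i < w₂ j)
    (hne : w₁ ≠ w₂)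
    (hfix : ∀ i ∈ Set.Icc 1 (m + n), ∀ j ∈ Set.Icc 1 (m + n),
      w₂ i = w₁ j → Λ j = Λ i) :
    ∃ I : Finset ℕ, I.Nonempty ∧ (↑I : Set ℕ) ⊆ Set.Icc 1 m ∧
      (∀ i ∈ I, ∃ j : ℕ,
        ((j : ℝ) = s + ((m : ℝ) + n) / 2 + (i : ℝ)) ∧ m + 1 ≤ j ∧ j ≤ m + n ∧
        w₂ i = w₁ j ∧ w₂ j = w₁ i) ∧
      (∀ k ∈ Set.Icc 1 (m + n), k ∉ I →
        (∀ i ∈ I, (k : ℝ) ≠ s + ((m : ℝ) + n) / 2 + (i : ℝ)) → w₂ k = w₁ k) := by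
  classical
  -- Rewrite Λ on the second block in terms of the absolute index.
  have hΛ2' : ∀ j, m + 1 ≤ j → j ≤ m + n →
      Λ j = (-s - ((n : ℝ) - 1)) / 2 + ((j : ℝ) - (m : ℝ) - 1) := by
    intro j h1 h2
    obtain ⟨b, hb1, hb2, rfl⟩ : ∃ b, 1 ≤ b ∧ b ≤ n ∧ j = m + b :=
      ⟨j - m, by omega, by omega, by omega⟩
    rw [hΛ2 b hb1 hb2]
    push_cast
    ring
  -- Λ is injective on each block.
  have hL1 : ∀ i j, 1 ≤ i → i ≤ m → 1 ≤ j → j ≤ m → Λ i = Λ j → i = j := by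
    intro i j hi1 hi2 hj1 hj2 h
    rw [hΛ1 i hi1 hi2, hΛ1 j hj1 hj2] at h
    have : (i : ℝ) = (j : ℝ) := by linarith
    exact_mod_cast this
  have hL2 : ∀ i j, m + 1 ≤ i → i ≤ m + n → m + 1 ≤ j → j ≤ m + n → Λ i = Λ j → i = j := by
    intro i j hi1 hi2 hj1 hj2 h
    rw [hΛ2' i hi1 hi2, hΛ2' j hj1 hj2] at h
    have : (i : ℝ) = (j : ℝ) := by linarith
    exact_mod_cast this
  -- Cross-block coincidence forces the index relation.
  have hL3 : ∀ i j, 1 ≤ i → i ≤ m → m + 1 ≤ j → j ≤ m + n → Λ j = Λ i →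
      (j : ℝ) = s + ((m : ℝ) + n) / 2 + (i : ℝ) := by
    intro i j hi1 hi2 hj1 hj2 h
    rw [hΛ2' j hj1 hj2, hΛ1 i hi1 hi2] at h
    linarith
  -- Fibers of Λ inside the interval have at most two elements.
  have htwo : ∀ i j k, 1 ≤ i → i ≤ m + n → 1 ≤ j → j ≤ m + n → 1 ≤ k → k ≤ m + n →
      Λ j = Λ i → Λ k = Λ i → j = k ∨ j = i ∨ k = i := by
    intro i j k hi1 hi2 hj1 hj2 hk1 hk2 hji hki
    rcases le_or_gt i m with hi | hi <;> rcases le_or_gt j m with hj | hj <;>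
      rcases le_or_gt k m with hk | hk
    · exact Or.inr (Or.inl (hL1 j i hj1 hj hi1 hi hji))
    · exact Or.inr (Or.inl (hL1 j i hj1 hj hi1 hi hji))
    · exact Or.inr (Or.inr (hL1 k i hk1 hk hi1 hi hki))
    · exact Or.inl (hL2 j k (by omega) hj2 (by omega) hk2 (hji.trans hki.symm))
    · exact Or.inl (hL1 j k hj1 hj hk1 hk (hji.trans hki.symm))
    · exact Or.inr (Or.inr (hL2 k i (by omega) hk2 (by omega) hi2 hki))
    · exact Or.inr (Or.inl (hL2 j i (by omega) hj2 (by omega) hi2 hji))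
    · exact Or.inr (Or.inl (hL2 j i (by omega) hj2 (by omega) hi2 hji))
  -- Define σ = w₁⁻¹ ∘ w₂ on the interval.
  have hσex : ∀ i, ∃ j, i ∈ Set.Icc 1 (m + n) →
      (j ∈ Set.Icc 1 (m + n) ∧ w₁ j = w₂ i ∧ Λ j = Λ i) := by
    intro i
    by_cases hi : i ∈ Set.Icc 1 (m + n)
    · obtain ⟨j, hj, hw⟩ := hbij₁.surjOn (hbij₂.mapsTo hi)
      exact ⟨j, fun _ => ⟨hj, hw, hfix i hi j hj hw.symm⟩⟩
    · exact ⟨i, fun h => absurd h hi⟩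
  choose σ hσ using hσex
  have hσmem : ∀ i, 1 ≤ i → i ≤ m + n → 1 ≤ σ i ∧ σ i ≤ m + n := by
    intro i h1 h2
    exact Set.mem_Icc.mp (hσ i (Set.mem_Icc.mpr ⟨h1, h2⟩)).1
  have hσw : ∀ i, 1 ≤ i → i ≤ m + n → w₁ (σ i) = w₂ i := by
    intro i h1 h2; exact (hσ i (Set.mem_Icc.mpr ⟨h1, h2⟩)).2.1
  have hσΛ : ∀ i, 1 ≤ i → i ≤ m + n → Λ (σ i) = Λ i := by
    intro i h1 h2; exact (hσ i (Set.mem_Icc.mpr ⟨h1, h2⟩)).2.2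
  -- σ i = i iff w₂ i = w₁ i.
  have heqiff : ∀ i, 1 ≤ i → i ≤ m + n → (σ i = i ↔ w₂ i = w₁ i) := by
    intro i h1 h2
    constructor
    · intro h; rw [← hσw i h1 h2, h]
    · intro h
      have := (hσw i h1 h2).trans h
      exact hbij₁.injOn (Set.mem_Icc.mpr (hσmem i h1 h2)) (Set.mem_Icc.mpr ⟨h1, h2⟩) this
  -- σ is an involution on non-fixed points.
  have hinv : ∀ i, 1 ≤ i → i ≤ m + n → σ i ≠ i → σ (σ i) = i := by
    intro i h1 h2 hne'
    obtain ⟨hs1, hs2⟩ := hσmem i h1 h2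
    obtain ⟨ht1, ht2⟩ := hσmem (σ i) hs1 hs2
    have h3 : Λ (σ i) = Λ i := hσΛ i h1 h2
    have h4 : Λ (σ (σ i)) = Λ i := (hσΛ (σ i) hs1 hs2).trans h3
    rcases htwo i (σ i) (σ (σ i)) h1 h2 hs1 hs2 ht1 ht2 h3 h4 with h | h | h
    · -- σ (σ i) = σ i forces σ i = i, contradiction
      exfalso
      have hw : w₂ (σ i) = w₁ (σ i) := by rw [← hσw (σ i) hs1 hs2, ← h]
      have : w₂ (σ i) = w₂ i := by rw [hw, hσw i h1 h2]
      exact hne' (hbij₂.injOn (Set.mem_Icc.mpr ⟨hs1, hs2⟩) (Set.mem_Icc.mpr ⟨h1, h2⟩) this)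
    · exact absurd h hne'
    · exact h
  -- non-fixed points pair across blocks
  have hpart : ∀ i, 1 ≤ i → i ≤ m → σ i ≠ i →
      m + 1 ≤ σ i ∧ (σ i : ℝ) = s + ((m : ℝ) + n) / 2 + (i : ℝ) := by
    intro i h1 h2 hne'
    obtain ⟨hs1, hs2⟩ := hσmem i h1 (by omega)
    have hs : m + 1 ≤ σ i := by
      by_contra h
      exact hne' (hL1 (σ i) i hs1 (by omega) h1 h2 (hσΛ i h1 (by omega)))
    exact ⟨hs, hL3 i (σ i) h1 h2 hs hs2 (hσΛ i h1 (by omega))⟩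
  have hpart2 : ∀ k, m + 1 ≤ k → k ≤ m + n → σ k ≠ k → σ k ≤ m := by
    intro k h1 h2 hne'
    obtain ⟨hs1, hs2⟩ := hσmem k (by omega) h2
    by_contra h
    exact hne' (hL2 (σ k) k (by omega) hs2 h1 h2 (hσΛ k (by omega) h2))
  -- The set of moved indices in the first block.
  refine ⟨Finset.filter (fun i => w₂ i ≠ w₁ i) (Finset.Icc 1 m), ?_, ?_, ?_, ?_⟩
  · -- Nonempty
    obtain ⟨k, hk⟩ := Function.ne_iff.mp hne
    have hkmem : k ∈ Set.Icc 1 (m + n) := by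
      by_contra h
      exact hk ((hid₁ k h).trans (hid₂ k h).symm)
    obtain ⟨hk1, hk2⟩ := Set.mem_Icc.mp hkmem
    rcases le_or_gt k m with h | h
    · exact ⟨k, Finset.mem_filter.mpr ⟨Finset.mem_Icc.mpr ⟨hk1, h⟩, fun hw => hk hw.symm⟩⟩
    · have hσk : σ k ≠ k := fun hc => hk (((heqiff k hk1 hk2).mp hc).symm)
      have hi2 : σ k ≤ m := hpart2 k (by omega) hk2 hσk
      obtain ⟨hi1, _⟩ := hσmem k hk1 hk2
      have hinvk : σ (σ k) = k := hinv k hk1 hk2 hσk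
      have hσi : σ (σ k) ≠ σ k := by rw [hinvk]; omega
      have : w₂ (σ k) ≠ w₁ (σ k) := fun hw => hσi ((heqiff (σ k) hi1 (by omega)).mpr hw)
      exact ⟨σ k, Finset.mem_filter.mpr ⟨Finset.mem_Icc.mpr ⟨hi1, hi2⟩, this⟩⟩
  · -- Subset
    intro i hi
    simp only [Finset.coe_filter, Set.mem_setOf_eq, Finset.mem_Icc] at hi
    exact Set.mem_Icc.mpr hi.1
  · -- Swap property
    intro i hi
    obtain ⟨hi', hwne⟩ := Finset.mem_filter.mp hi
    obtain ⟨hi1, hi2⟩ := Finset.mem_Icc.mp hi'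
    have hσi : σ i ≠ i := fun hc => hwne ((heqiff i hi1 (by omega)).mp hc)
    obtain ⟨hj1, hjeq⟩ := hpart i hi1 hi2 hσi
    obtain ⟨_, hj2⟩ := hσmem i hi1 (by omega)
    refine ⟨σ i, hjeq, hj1, hj2, (hσw i hi1 (by omega)).symm, ?_⟩
    have h := hσw (σ i) (by omega) hj2
    rw [hinv i hi1 (by omega) hσi] at h
    exact h.symm
  · -- Fixed away from the pairs
    intro k hkmem hknot hkne
    obtain ⟨hk1, hk2⟩ := Set.mem_Icc.mp hkmem
    by_contra hw
    have hσk : σ k ≠ k := fun hc => hw ((heqiff k hk1 hk2).mp hc)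
    rcases le_or_gt k m with h | h
    · exact hknot (Finset.mem_filter.mpr ⟨Finset.mem_Icc.mpr ⟨hk1, h⟩, hw⟩)
    · have hi2 : σ k ≤ m := hpart2 k (by omega) hk2 hσk
      obtain ⟨hi1, _⟩ := hσmem k hk1 hk2
      have hinvk : σ (σ k) = k := hinv k hk1 hk2 hσk
      have hσi : σ (σ k) ≠ σ k := by rw [hinvk]; omega
      have hiI : σ k ∈ Finset.filter (fun i => w₂ i ≠ w₁ i) (Finset.Icc 1 m) :=
        Finset.mem_filter.mpr ⟨Finset.mem_Icc.mpr ⟨hi1, hi2⟩,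
          fun hw' => hσi ((heqiff (σ k) hi1 (by omega)).mpr hw')⟩
      have := hpart (σ k) hi1 hi2 hσi
      rw [hinvk] at this
      exact hkne (σ k) hiI this.2
end

section
/- Let m ≤ n and let α be an integer with 0 ≤ α ≤ ⌊(m+n)/2⌋. The number of shuffle permutations w of {1,...,m+n} satisfying w(i) ∈ {2i + n − α − 1, 2i + n − α} for all 1 ≤ i ≤ min(m, α+1) is positive; moreover if α + 1 ≤ m there is exactly one such w with w(i) = 2i + n − α − 1 for all 1 ≤ i ≤ min(m, α+1). -/
/-- Shuffle permutations of `{1,...,m+n}`: bijections of `{1,...,m+n}` (taken to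
be the identity outside), increasing on `{1,...,m}` and on `{m+1,...,m+n}`. -/
def IsShuffle (m n : ℕ) (w : ℕ → ℕ) : Prop :=
  Set.BijOn w (Set.Icc 1 (m + n)) (Set.Icc 1 (m + n)) ∧
  (∀ i ∉ Set.Icc 1 (m + n), w i = i) ∧
  (∀ i j, 1 ≤ i → i < j → j ≤ m → w i < w j) ∧
  (∀ i j, m + 1 ≤ i → i < j → j ≤ m + n → w i < w j)

/-- The unique shuffle with `w i = 2i + n - α - 1` for `i ≤ α + 1` (case `α + 1 ≤ m`). -/
def W1 (m n α i : ℕ) : ℕ :=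
  if i < 1 ∨ m + n < i then i
  else if i ≤ α + 1 then n - α - 1 + 2 * i
  else if i ≤ m then n + i
  else if i ≤ m + (n - α) then i - m
  else 2 * (i - m) - (n - α)

/-- A shuffle with `w i = 2i + n - α` for `i ≤ m` (case `m ≤ α`). -/
def W2 (m n α i : ℕ) : ℕ :=
  if i < 1 ∨ m + n < i then i
  else if i ≤ m then n - α + 2 * i
  else if i ≤ m + (n - α + 1) then i - m
  else if i ≤ m + (n - α + m) then 2 * (i - m) - (n - α) - 1
  else i

lemma chainAux {f : ℕ → ℕ} {a b : ℕ} (h : ∀ i j, a ≤ i → i < j → j ≤ b → f i < f j)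
    {i j : ℕ} (hai : a ≤ i) (hij : i ≤ j) (hjb : j ≤ b) : f i + (j - i) ≤ f j := by
  induction j, hij using Nat.le_induction with
  | base => simp
  | succ k hk ih =>
    have h1 : f k < f (k + 1) := h k (k + 1) (le_trans hai hk) (Nat.lt_succ_self k) hjb
    have h2 := ih (by omega)
    omega

lemma enumUnique {a b : ℕ} {f g : ℕ → ℕ} {T : Set ℕ}
    (hf : Set.BijOn f (Set.Icc a b) T) (hg : Set.BijOn g (Set.Icc a b) T)
    (hfm : ∀ i j, a ≤ i → i < j → j ≤ b → f i < f j)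
    (hgm : ∀ i j, a ≤ i → i < j → j ≤ b → g i < g j) :
    ∀ i ∈ Set.Icc a b, f i = g i := by
  intro i
  induction i using Nat.strong_induction_on with
  | _ i ih =>
  intro hi
  rcases lt_trichotomy (f i) (g i) with h | h | h
  · obtain ⟨j, hj, hgj⟩ := hg.2.2 (hf.1 hi)
    simp only [Set.mem_Icc] at hi hj
    rcases lt_trichotomy j i with hji | rfl | hji
    · have h1 : f j = g j := ih j hji (Set.mem_Icc.mpr hj)
      have h2 : f j < f i := hfm j i hj.1 hji hi.2
      omega
    · omega
    · have : g i < g j := hgm i j hi.1 hji hj.2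
      omega
  · exact h
  · obtain ⟨j, hj, hfj⟩ := hf.2.2 (hg.1 hi)
    simp only [Set.mem_Icc] at hi hj
    rcases lt_trichotomy j i with hji | rfl | hji
    · have h1 : f j = g j := ih j hji (Set.mem_Icc.mpr hj)
      have h2 : g j < g i := hgm j i hj.1 hji hi.2
      omega
    · omega
    · have : f i < f j := hfm i j hi.1 hji hj.2
      omega

lemma restrictBij {m n : ℕ} {w : ℕ → ℕ} (h : IsShuffle m n w) :
    Set.BijOn w (Set.Icc (m + 1) (m + n)) (Set.Icc 1 (m + n) \ (w '' Set.Icc 1 m)) := by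
  obtain ⟨hb, -, -, -⟩ := h
  refine ⟨?_, fun x hx y hy => hb.2.1 ?_ ?_, ?_⟩
  · intro i hi
    simp only [Set.mem_Icc] at hi
    refine ⟨hb.1 (Set.mem_Icc.mpr ⟨by omega, hi.2⟩), ?_⟩
    rintro ⟨k, hk, hki⟩
    simp only [Set.mem_Icc] at hk
    have := hb.2.1 (Set.mem_Icc.mpr (⟨hk.1, by omega⟩ : 1 ≤ k ∧ k ≤ m + n))
      (Set.mem_Icc.mpr ⟨by omega, hi.2⟩) hki
    omega
  · simp only [Set.mem_Icc] at hx ⊢; omega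
  · simp only [Set.mem_Icc] at hy ⊢; omega
  · intro y hy
    obtain ⟨hy1, hy2⟩ := hy
    obtain ⟨x, hx, hxy⟩ := hb.2.2 hy1
    simp only [Set.mem_Icc] at hx
    rcases le_or_gt x m with hxm | hxm
    · exact absurd ⟨x, Set.mem_Icc.mpr ⟨hx.1, hxm⟩, hxy⟩ hy2
    · exact ⟨x, Set.mem_Icc.mpr ⟨by omega, hx.2⟩, hxy⟩

lemma W1shuffle (m n α : ℕ) (hm : 1 ≤ m) (hmn : m ≤ n) (hα : α ≤ (m + n) / 2)
    (ham : α + 1 ≤ m) : IsShuffle m n (W1 m n α) := by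
  have hbij : Set.BijOn (W1 m n α) (Set.Icc 1 (m + n)) (Set.Icc 1 (m + n)) := by
    have hmap : Set.MapsTo (W1 m n α) (Set.Icc 1 (m + n)) (Set.Icc 1 (m + n)) := by
      intro i hi
      simp only [Set.mem_Icc] at hi ⊢
      unfold W1; split_ifs <;> omega
    rw [← (Set.finite_Icc 1 (m + n)).injOn_iff_bijOn_of_mapsTo hmap]
    intro x hx y hy hxy
    simp only [Set.mem_Icc] at hx hy
    unfold W1 at hxy
    split_ifs at hxy <;> omega
  refine ⟨hbij, ?_, ?_, ?_⟩
  · intro i hi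
    simp only [Set.mem_Icc, not_and_or, not_le] at hi
    unfold W1; split_ifs <;> omega
  · intro i j h1 h2 h3
    unfold W1; split_ifs <;> omega
  · intro i j h1 h2 h3
    unfold W1; split_ifs <;> omega

lemma W2shuffle (m n α : ℕ) (hm : 1 ≤ m) (hmn : m ≤ n) (hα : α ≤ (m + n) / 2)
    (ham : m ≤ α) : IsShuffle m n (W2 m n α) := by
  have hbij : Set.BijOn (W2 m n α) (Set.Icc 1 (m + n)) (Set.Icc 1 (m + n)) := by
    have hmap : Set.MapsTo (W2 m n α) (Set.Icc 1 (m + n)) (Set.Icc 1 (m + n)) := by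
      intro i hi
      simp only [Set.mem_Icc] at hi ⊢
      unfold W2; split_ifs <;> omega
    rw [← (Set.finite_Icc 1 (m + n)).injOn_iff_bijOn_of_mapsTo hmap]
    intro x hx y hy hxy
    simp only [Set.mem_Icc] at hx hy
    unfold W2 at hxy
    split_ifs at hxy <;> omega
  refine ⟨hbij, ?_, ?_, ?_⟩
  · intro i hi
    simp only [Set.mem_Icc, not_and_or, not_le] at hi
    unfold W2; split_ifs <;> omega
  · intro i j h1 h2 h3
    unfold W2; split_ifs <;> omega
  · intro i j h1 h2 h3
    unfold W2; split_ifs <;> omega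

/-- Let `m ≤ n` and `0 ≤ α ≤ ⌊(m+n)/2⌋`. There exists a shuffle
permutation `w` with `w(i) ∈ {2i + n − α − 1, 2i + n − α}` for all
`1 ≤ i ≤ min(m, α+1)`; moreover if `α + 1 ≤ m` there is exactly one such `w`
with `w(i) = 2i + n − α − 1` for all `1 ≤ i ≤ min(m, α+1)`. -/
theorem stmt11 (m n α : ℕ) (hm : 1 ≤ m) (hmn : m ≤ n) (hα : α ≤ (m + n) / 2) :
    (∃ w : ℕ → ℕ, IsShuffle m n w ∧
      ∀ i, 1 ≤ i → i ≤ min m (α + 1) →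
        (w i = 2 * i + (n - α) - 1 ∨ w i = 2 * i + (n - α))) ∧
    (α + 1 ≤ m →
      ∃! w : ℕ → ℕ, IsShuffle m n w ∧
        ∀ i, 1 ≤ i → i ≤ min m (α + 1) → w i = 2 * i + (n - α) - 1) := by
  constructor
  · rcases le_or_gt (α + 1) m with ham | ham
    · refine ⟨W1 m n α, W1shuffle m n α hm hmn hα ham, fun i h1 h2 => Or.inl ?_⟩
      have h2' : i ≤ α + 1 := le_trans h2 (min_le_right _ _)
      unfold W1; split_ifs <;> omega
    · have ham' : m ≤ α := by omega
      refine ⟨W2 m n α, W2shuffle m n α hm hmn hα ham', fun i h1 h2 => Or.inr ?_⟩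
      have h2' : i ≤ m := le_trans h2 (min_le_left _ _)
      unfold W2; split_ifs <;> omega
  · intro ham
    have hsh := W1shuffle m n α hm hmn hα ham
    refine ⟨W1 m n α, ⟨hsh, fun i h1 h2 => ?_⟩, ?_⟩
    · have h2' : i ≤ α + 1 := le_trans h2 (min_le_right _ _)
      unfold W1; split_ifs <;> omega
    · rintro w ⟨hw, hval⟩
      -- w agrees with W1 on [1, m]
      have hwm : w m ≤ m + n := by
        have := hw.1.1 (Set.mem_Icc.mpr ⟨hm, by omega⟩)
        simpa using this.2
      have hwa : w (α + 1) = n + α + 1 := by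
        have := hval (α + 1) (by omega) (by omega)
        omega
      have hstep1 : ∀ i, 1 ≤ i → i ≤ m → w i = W1 m n α i := by
        intro i h1 h2
        rcases le_or_gt i (α + 1) with hia | hia
        · have := hval i h1 (by omega)
          unfold W1; split_ifs <;> omega
        · have hlo := chainAux hw.2.2.1 (show 1 ≤ α + 1 by omega) (le_of_lt hia) h2
          have hhi := chainAux hw.2.2.1 (show 1 ≤ i by omega) h2 (le_refl m)
          unfold W1; split_ifs <;> omega
      have hS : w '' Set.Icc 1 m = W1 m n α '' Set.Icc 1 m := by
        apply Set.image_congr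
        intro a ha
        exact hstep1 a (Set.mem_Icc.mp ha).1 (Set.mem_Icc.mp ha).2
      have hbw := restrictBij hw
      rw [hS] at hbw
      have hbW := restrictBij hsh
      have henum := enumUnique hbw hbW hw.2.2.2 hsh.2.2.2
      funext i
      rcases le_or_gt i (m + n) with hi2 | hi2
      · rcases le_or_gt 1 i with hi1 | hi1
        · rcases le_or_gt i m with him | him
          · exact hstep1 i hi1 him
          · exact henum i (Set.mem_Icc.mpr ⟨by omega, hi2⟩)
        · rw [hw.2.1 i (by simp only [Set.mem_Icc]; omega),
            hsh.2.1 i (by simp only [Set.mem_Icc]; omega)]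
      · rw [hw.2.1 i (by simp only [Set.mem_Icc]; omega),
          hsh.2.1 i (by simp only [Set.mem_Icc]; omega)]
end

section
/- Let m ≤ n, let α be an integer with 1 ≤ α ≤ min(m,n)−1 or more generally 0 ≤ α ≤ ⌊(m+n)/2⌋ with (m,n,α) ≠ (m,m,m), and let w be a shuffle permutation of {1,...,m+n} with m_w its least index i with w(i) > i. If there exists i ∈ {m_w,...,m} with n−α−1 ≤ w(i)−2i ≤ n−α, then m_w ≤ α+1, and the number of such i is at most min(m, α+1) − m_w + 1. -/
/-- Let `m ≤ n`, `0 ≤ α ≤ ⌊(m+n)/2⌋` with `(m,n,α) ≠ (m,m,m)`,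
and let `w` be a shuffle permutation of `{1,...,m+n}` with `m_w` the least
index `i` with `w(i) > i`. If some `i ∈ {m_w,...,m}` satisfies
`n − α − 1 ≤ w(i) − 2i ≤ n − α`, then `m_w ≤ α + 1`, and the number of such
`i` is at most `min(m, α+1) − m_w + 1`. -/
theorem stmt17 (m n α : ℕ) (hm : 1 ≤ m) (hmn : m ≤ n) (hα : α ≤ (m + n) / 2)
    (hne : ¬(n = m ∧ α = m))
    (w : ℕ → ℕ)
    (hbij : Set.BijOn w (Set.Icc 1 (m + n)) (Set.Icc 1 (m + n)))
    (hsh1 : ∀ i j, 1 ≤ i → i < j → j ≤ m → w i < w j)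
    (hsh2 : ∀ i j, m + 1 ≤ i → i < j → j ≤ m + n → w i < w j)
    (mw : ℕ) (hmw1 : 1 ≤ mw) (hmwm : mw ≤ m) (h1 : mw < w mw)
    (hleast : ∀ k, 1 ≤ k → k < mw → w k ≤ k)
    (hex : ∃ i, mw ≤ i ∧ i ≤ m ∧
      (n : ℤ) - α - 1 ≤ (w i : ℤ) - 2 * i ∧ (w i : ℤ) - 2 * i ≤ (n : ℤ) - α) :
    mw ≤ α + 1 ∧
      {i : ℕ | mw ≤ i ∧ i ≤ m ∧
        (n : ℤ) - α - 1 ≤ (w i : ℤ) - 2 * i ∧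
        (w i : ℤ) - 2 * i ≤ (n : ℤ) - α}.ncard ≤ min m (α + 1) - mw + 1 := by
  -- increasing on [1,m] gives w i + d ≤ w (i+d)
  have step : ∀ d i, 1 ≤ i → i + d ≤ m → w i + d ≤ w (i + d) := by
    intro d
    induction d with
    | zero => intro i _ _; simp
    | succ d ih =>
      intro i hi hid
      show w i + (d + 1) ≤ w (i + d + 1)
      have h1 : w i + d ≤ w (i + d) := ih i hi (by omega)
      have h2 : w (i + d) < w (i + d + 1) :=
        hsh1 (i + d) (i + d + 1) (by omega) (by omega) (by omega)
      omega
  have hwm : w m ≤ m + n := (hbij.mapsTo ⟨hm, by omega⟩).2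
  -- key bound: any i in the set satisfies i ≤ α + 1
  have key : ∀ i, mw ≤ i → i ≤ m →
      (n : ℤ) - α - 1 ≤ (w i : ℤ) - 2 * i → i ≤ α + 1 := by
    intro i hi him hlo
    have h1i : 1 ≤ i := le_trans hmw1 hi
    have hw : w i + (m - i) ≤ w m := by
      have := step (m - i) i h1i (by omega)
      rwa [Nat.add_sub_cancel' him] at this
    have hwi : w i ≤ n + i := by omega
    omega
  obtain ⟨i₀, hi₀1, hi₀2, hi₀3, _⟩ := hex
  have hmwα : mw ≤ α + 1 := le_trans hi₀1 (key i₀ hi₀1 hi₀2 hi₀3)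
  refine ⟨hmwα, ?_⟩
  have hsub : {i : ℕ | mw ≤ i ∧ i ≤ m ∧
        (n : ℤ) - α - 1 ≤ (w i : ℤ) - 2 * i ∧
        (w i : ℤ) - 2 * i ≤ (n : ℤ) - α} ⊆
      (Finset.Icc mw (min m (α + 1)) : Finset ℕ) := by
    intro i ⟨h1, h2, h3, _⟩
    simp only [Finset.coe_Icc, Set.mem_Icc]
    exact ⟨h1, le_min h2 (key i h1 h2 h3)⟩
  calc _ ≤ (↑(Finset.Icc mw (min m (α + 1)) : Finset ℕ) : Set ℕ).ncard :=
        Set.ncard_le_ncard hsub (Finset.finite_toSet _)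
    _ = (Finset.Icc mw (min m (α + 1))).card := Set.ncard_coe_finset _
    _ = min m (α + 1) + 1 - mw := Nat.card_Icc _ _
    _ ≤ min m (α + 1) - mw + 1 := by omega
end
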